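/- arXiv:2006.08522 — 2 statements merged into one kernel-verified Lean document; each statement's English description precedes it below -/
import Mathlib

section
/- The Laplace mechanism satisfies ε-differential privacy: if S : X^n → ℝ has global sensitivity Δ (i.e. |S(D) - S(D')| ≤ Δ for all neighboring databases D, D'), then the mechanism that outputs S(D) + U, where U has density f(u) = (ε/(2Δ)) exp(-ε|u|/Δ), satisfies that for all neighboring D, D' and all measurable sets A, P(S(D)+U ∈ A) ≤ e^ε · P(S(D')+U ∈ A). -/
open MeasureTheory Real

/-- The Laplace mechanism satisfies ε-differential privacy. -/
theorem laplace_mechanism_dp {X : Type*} {n : ℕ} (ε Δ : ℝ) (hε : 0 < ε) (hΔ : 0 < Δ)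
    (S : (Fin n → X) → ℝ)
    (hsens : ∀ D D' : Fin n → X, (∃! i, D i ≠ D' i) → |S D - S D'| ≤ Δ)
    (M : (Fin n → X) → Measure ℝ)
    (hM : ∀ D, M D = volume.withDensity
      (fun a => ENNReal.ofReal (ε / (2 * Δ) * Real.exp (-(ε * |a - S D|) / Δ))))
    (D D' : Fin n → X) (hnbr : ∃! i, D i ≠ D' i) (A : Set ℝ) (hA : MeasurableSet A) :
    M D A ≤ ENNReal.ofReal (Real.exp ε) * M D' A := by
  have hmeas : Measurable fun a : ℝ =>
      ENNReal.ofReal (ε / (2 * Δ) * Real.exp (-(ε * |a - S D'|) / Δ)) := by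
    measurability
  rw [hM, hM, withDensity_apply _ hA, withDensity_apply _ hA,
    ← lintegral_const_mul _ hmeas]
  refine lintegral_mono fun a => ?_
  rw [← ENNReal.ofReal_mul (Real.exp_pos ε).le]
  apply ENNReal.ofReal_le_ofReal
  have hc : 0 ≤ ε / (2 * Δ) := by positivity
  have key : -(ε * |a - S D|) / Δ ≤ ε + -(ε * |a - S D'|) / Δ := by
    have h1 : |a - S D'| - |a - S D| ≤ Δ := by
      calc |a - S D'| - |a - S D| ≤ |a - S D' - (a - S D)| :=
            abs_sub_abs_le_abs_sub _ _
        _ = |S D - S D'| := by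
            rw [show a - S D' - (a - S D) = S D - S D' from by ring]
        _ ≤ Δ := hsens D D' hnbr
    rw [div_le_iff₀ hΔ]
    have h2 : (ε + -(ε * |a - S D'|) / Δ) * Δ = ε * Δ - ε * |a - S D'| := by
      field_simp
      ring
    rw [h2]
    nlinarith [hε.le]
  calc ε / (2 * Δ) * Real.exp (-(ε * |a - S D|) / Δ)
      ≤ ε / (2 * Δ) * Real.exp (ε + -(ε * |a - S D'|) / Δ) := by
        apply mul_le_mul_of_nonneg_left (Real.exp_le_exp.mpr key) hc
    _ = Real.exp ε * (ε / (2 * Δ) * Real.exp (-(ε * |a - S D'|) / Δ)) := by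
        rw [Real.exp_add]; ring
end

section
/- The integer additive mechanism with double geometric noise satisfies ε-differential privacy for counting queries: if S : X^n → ℤ satisfies |S(D) − S(D')| ≤ 1 for neighboring D, D', then the mechanism outputting S(D) + U, where U is double geometric with parameter ε, satisfies for all neighboring D, D' and all integers a, P(S(D)+U = a) ≤ e^ε P(S(D')+U = a). -/
open Real

/-- The integer additive mechanism with double geometric noise is ε-DP for counting
queries of sensitivity 1. -/
theorem double_geometric_mechanism_dp {X : Type*} {n : ℕ} (ε : ℝ) (hε : 0 < ε)
    (f : ℤ → ℝ)
    (hf : ∀ u : ℤ, f u = (1 - Real.exp (-ε)) / (1 + Real.exp (-ε)) * Real.exp (-ε * |(u : ℝ)|))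
    (S : (Fin n → X) → ℤ)
    (hsens : ∀ D D' : Fin n → X, (∃! i, D i ≠ D' i) → |S D - S D'| ≤ 1) :
    ∀ D D' : Fin n → X, (∃! i, D i ≠ D' i) → ∀ a : ℤ,
      f (a - S D) ≤ Real.exp ε * f (a - S D') := by
  intro D D' hnb a
  have hsen : |S D - S D'| ≤ 1 := hsens D D' hnb
  rw [hf, hf]
  have hc : (0:ℝ) < (1 - Real.exp (-ε)) / (1 + Real.exp (-ε)) := by
    apply div_pos
    · have : Real.exp (-ε) < 1 := by
        rw [Real.exp_lt_one_iff]; linarith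
      linarith
    · positivity
  set u : ℝ := ((a - S D : ℤ) : ℝ)
  set v : ℝ := ((a - S D' : ℤ) : ℝ)
  have hkey : |v| ≤ |u| + 1 := by
    have h1 : |v - u| ≤ 1 := by
      have : v - u = ((S D - S D' : ℤ) : ℝ) := by push_cast [u, v]; ring
      rw [this, ← Int.cast_abs]
      exact_mod_cast hsen
    calc |v| ≤ |u| + |v - u| := by
          have := abs_sub_abs_le_abs_sub v u; linarith
      _ ≤ |u| + 1 := by linarith
  rw [mul_comm (Real.exp ε), mul_assoc]
  apply mul_le_mul_of_nonneg_left _ hc.le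
  rw [← Real.exp_add]
  apply Real.exp_le_exp.mpr
  have h2 : ε * |v| ≤ ε * (|u| + 1) := mul_le_mul_of_nonneg_left hkey hε.le
  rw [mul_add, mul_one] at h2
  linarith
end
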